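/- Let K be a field with char K ∉ {2,3} and let e, f ∈ K satisfy e ≠ 0, f ≠ 0 and e² ≠ 4f. Then the Weierstrass curve E_{e,f}: y² = x(x² + (e²−2f)x + f²) over K has nonzero discriminant (so is an elliptic curve), the point Q = (f, ef) lies on E_{e,f}, its double satisfies 2Q = (0,0), and Q has exact order 4 in the group E_{e,f}(K). -/

import Mathlib

open WeierstrassCurve

/-- The Weierstrass curve `y² = x(x² + ax + b)`, i.e. `a₁ = a₃ = a₆ = 0`, `a₂ = a`,
`a₄ = b`. -/
def Wab {K : Type*} [Field K] (a b : K) : WeierstrassCurve K :=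
  { a₁ := 0, a₂ := a, a₃ := 0, a₄ := b, a₆ := 0 }

private lemma some_eq_some {K : Type*} [Field K] {W : Affine K} {x₁ y₁ x₂ y₂ : K}
    (h₁ : W.Nonsingular x₁ y₁) (h₂ : W.Nonsingular x₂ y₂) (hx : x₁ = x₂) (hy : y₁ = y₂) :
    Affine.Point.some _ _ h₁ = Affine.Point.some _ _ h₂ := by
  subst hx; subst hy; rfl

open Classical in
/-- Let `K` be a field with `char K ∉ {2,3}` and `e, f ∈ K` with `e ≠ 0`,
`f ≠ 0`, `e² ≠ 4f`.  Then the Weierstrass curve `E_{e,f} : y² = x(x² + (e²−2f)x + f²)` has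
nonzero discriminant, the point `Q = (f, ef)` lies on it, `2Q = (0,0)`, and `Q` has exact
order `4` in `E_{e,f}(K)`. -/
theorem stmt1 {K : Type*} [Field K] (h2 : (2 : K) ≠ 0) (h3 : (3 : K) ≠ 0)
    (e f : K) (he : e ≠ 0) (hf : f ≠ 0) (hef : e ^ 2 ≠ 4 * f) :
    (Wab (e ^ 2 - 2 * f) (f ^ 2)).Δ ≠ 0 ∧
    (Wab (e ^ 2 - 2 * f) (f ^ 2)).toAffine.Equation f (e * f) ∧
    ∃ (hQ : (Wab (e ^ 2 - 2 * f) (f ^ 2)).toAffine.Nonsingular f (e * f))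
      (h0 : (Wab (e ^ 2 - 2 * f) (f ^ 2)).toAffine.Nonsingular 0 0),
        2 • (Affine.Point.some _ _ hQ) = Affine.Point.some _ _ h0 ∧
        addOrderOf (Affine.Point.some _ _ hQ) = 4 := by
  set W := (Wab (e ^ 2 - 2 * f) (f ^ 2)).toAffine with hW
  have hΔ : (Wab (e ^ 2 - 2 * f) (f ^ 2)).Δ ≠ 0 := by
    have : (Wab (e ^ 2 - 2 * f) (f ^ 2)).Δ = 2 ^ 4 * f ^ 4 * e ^ 2 * (e ^ 2 - 4 * f) := by
      simp only [Wab, WeierstrassCurve.Δ, b₂, b₄, b₆, b₈]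
      ring
    rw [this]
    exact mul_ne_zero (mul_ne_zero (mul_ne_zero (pow_ne_zero 4 h2) (pow_ne_zero 4 hf))
      (pow_ne_zero 2 he)) (sub_ne_zero.mpr hef)
  have heqQ : W.Equation f (e * f) := by
    rw [Affine.equation_iff]; simp only [hW, Wab]; ring
  have heq0 : W.Equation 0 0 := by
    rw [Affine.equation_iff]; simp only [hW, Wab]; ring
  have hQ : W.Nonsingular f (e * f) := (W.equation_iff_nonsingular_of_Δ_ne_zero hΔ).mp heqQ
  have h0 : W.Nonsingular 0 0 := (W.equation_iff_nonsingular_of_Δ_ne_zero hΔ).mp heq0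
  have hnegY : ∀ x y : K, W.negY x y = -y := by
    intro x y; simp [hW, Wab, Affine.negY]
  have hyne : (e * f : K) ≠ W.negY f (e * f) := by
    rw [hnegY]
    intro h
    apply mul_ne_zero h2 (mul_ne_zero he hf)
    linear_combination h
  have hslope : W.slope f f (e * f) (e * f) = e := by
    rw [Affine.slope_of_Y_ne rfl hyne, hnegY]
    simp only [hW, Wab]
    rw [div_eq_iff (by intro h; apply mul_ne_zero h2 (mul_ne_zero he hf); linear_combination h)]
    ring
  have hx3 : W.addX f f (W.slope f f (e * f) (e * f)) = 0 := by
    rw [hslope]; simp only [Affine.addX, hW, Wab]; ring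
  have hy3 : W.addY f f (e * f) (W.slope f f (e * f) (e * f)) = 0 := by
    rw [Affine.addY, Affine.negAddY, hx3, hnegY, hslope]; ring
  have hdbl : 2 • (Affine.Point.some _ _ hQ) = Affine.Point.some _ _ h0 := by
    rw [two_nsmul, Affine.Point.add_self_of_Y_ne hyne]
    exact some_eq_some _ _ hx3 hy3
  refine ⟨hΔ, heqQ, hQ, h0, hdbl, ?_⟩
  have h4 : (4 : ℕ) • (Affine.Point.some _ _ hQ) = 0 := by
    have : (4 : ℕ) • (Affine.Point.some _ _ hQ) = 2 • (2 • (Affine.Point.some _ _ hQ)) := by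
      rw [← mul_nsmul]
    rw [this, hdbl, two_nsmul]
    exact Affine.Point.add_self_of_Y_eq (by rw [hnegY]; ring)
  have hdvd : addOrderOf (Affine.Point.some _ _ hQ) ∣ 4 := addOrderOf_dvd_of_nsmul_eq_zero h4
  have hne1 : Affine.Point.some _ _ hQ ≠ 0 := fun h => by simp [Affine.Point.zero_def] at h
  have hne2 : ¬ addOrderOf (Affine.Point.some _ _ hQ) ∣ 2 := by
    intro h
    have := addOrderOf_dvd_iff_nsmul_eq_zero.mp h
    rw [hdbl] at this
    simp [Affine.Point.zero_def] at this
  have hle : addOrderOf (Affine.Point.some _ _ hQ) ≤ 4 := Nat.le_of_dvd (by norm_num) hdvd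
  interval_cases h : addOrderOf (Affine.Point.some _ _ hQ) <;>
    simp_all <;> omega
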